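/- The hypothesis class H = { x ↦ sign(x_{1:d}ᵀ U x_{d+1:2d}) : U ∈ O(d) } on ℝ^{2d} has VC dimension at least d(d−1)/2. -/

import Mathlib

open NormedSpace Matrix Filter

attribute [local instance] Matrix.linftyOpNormedRing Matrix.linftyOpNormedAlgebra

noncomputable def myPt (d : ℕ) (i j : Fin d) : Fin d ⊕ Fin d → ℝ :=
  Sum.elim (Pi.single i 1) (Pi.single j 1)

lemma myPt_inj (d : ℕ) (i j i' j' : Fin d) (h : myPt d i j = myPt d i' j') :
    i = i' ∧ j = j' := by
  constructor
  · have h1 := congrFun h (Sum.inl i)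
    simp only [myPt, Sum.elim_inl, Pi.single_apply] at h1
    by_contra hne
    rw [if_neg hne] at h1
    exact one_ne_zero h1
  · have h1 := congrFun h (Sum.inr j)
    simp only [myPt, Sum.elim_inr, Pi.single_apply] at h1
    by_contra hne
    rw [if_neg hne] at h1
    exact one_ne_zero h1

/-- The hypothesis class `{ x ↦ sign(x_{1:d}ᵀ U x_{d+1:2d}) : U ∈ O(d) }` on `ℝ^{2d}`
has VC dimension at least `d(d−1)/2`: there is a set of `d(d−1)/2` points which it
shatters. -/
theorem stmt_8 (d : ℕ) :
    ∃ S : Finset (Fin d ⊕ Fin d → ℝ), S.card = d * (d - 1) / 2 ∧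
      ∀ σ : (Fin d ⊕ Fin d → ℝ) → ℝ, (∀ x ∈ S, σ x = 1 ∨ σ x = -1) →
        ∃ U ∈ Matrix.orthogonalGroup (Fin d) ℝ,
          ∀ x ∈ S, Real.sign (∑ i, ∑ j, x (Sum.inl i) * U i j * x (Sum.inr j)) = σ x := by
  classical
  set P : Finset (Fin d × Fin d) := Finset.univ.filter (fun p => p.1 < p.2) with hP
  refine ⟨P.image (fun p => myPt d p.1 p.2), ?_, ?_⟩
  · rw [Finset.card_image_of_injOn]
    · rw [hP, Finset.card_filter, Fintype.sum_prod_type_right]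
      have h : ∀ j : Fin d, (∑ i : Fin d, if i < j then (1:ℕ) else 0) = (j : ℕ) := by
        intro j
        rw [Finset.sum_boole]
        rw [show Finset.univ.filter (fun i : Fin d => i < j) = Finset.Iio j by ext x; simp]
        simp [Fin.card_Iio]
      simp only [h]
      rw [Fin.sum_univ_eq_sum_range (fun i => i) d, Finset.sum_range_id]
    · intro p _ q _ hpq
      obtain ⟨h1, h2⟩ := myPt_inj d _ _ _ _ hpq
      exact Prod.ext h1 h2
  · intro σ hσ
    -- the skew-symmetric matrix of signs
    set A : Matrix (Fin d) (Fin d) ℝ :=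
      Matrix.of (fun i j => if i < j then σ (myPt d i j)
        else if j < i then -σ (myPt d j i) else 0) with hA
    have hAskew : Aᵀ = -A := by
      ext i j
      simp only [Matrix.transpose_apply, Matrix.neg_apply, hA, Matrix.of_apply]
      rcases lt_trichotomy i j with h | h | h
      · simp [h, h.asymm]
      · simp [h]
      · simp [h, h.asymm]
    -- orthogonality of exp (t • A)
    have hmem : ∀ t : ℝ, NormedSpace.exp (t • A) ∈ Matrix.orthogonalGroup (Fin d) ℝ := by
      intro t
      rw [Matrix.mem_orthogonalGroup_iff]
      rw [← Matrix.exp_transpose]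
      have h1 : (t • A)ᵀ = -(t • A) := by
        rw [Matrix.transpose_smul, hAskew, smul_neg]
      rw [h1, ← Matrix.exp_add_of_commute _ _ ((Commute.refl (t • A)).neg_right)]
      simp [exp_zero]
    -- the sign condition holds eventually for small t > 0
    have key : ∀ᶠ t in nhdsWithin (0:ℝ) (Set.Ioi 0), ∀ p ∈ P,
        Real.sign (NormedSpace.exp (t • A) p.1 p.2) = σ (myPt d p.1 p.2) := by
      rw [Filter.eventually_all_finset]
      intro p hp
      have hplt : p.1 < p.2 := by
        rw [hP] at hp; simpa using (Finset.mem_filter.mp hp).2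
      have hmemS : myPt d p.1 p.2 ∈ P.image (fun p => myPt d p.1 p.2) :=
        Finset.mem_image_of_mem _ hp
      set c : ℝ := σ (myPt d p.1 p.2) with hc
      have hc1 : c = 1 ∨ c = -1 := hσ _ hmemS
      have hc0 : c ≠ 0 := by rcases hc1 with h | h <;> rw [h] <;> norm_num
      have hAij : A p.1 p.2 = c := by simp [hA, hplt, hc]
      -- derivative at 0 of the entry
      have H0 : HasDerivAt (fun t : ℝ => NormedSpace.exp (t • A)) A 0 := by
        have h := hasDerivAt_exp_smul_const (𝕂 := ℝ) A (0 : ℝ)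
        rw [zero_smul, exp_zero, one_mul] at h
        exact h
      set E := LinearMap.toContinuousLinearMap (Matrix.entryLinearMap ℝ ℝ p.1 p.2) with hE
      have Hf : HasDerivAt (fun t : ℝ => NormedSpace.exp (t • A) p.1 p.2) c 0 := by
        have := E.hasFDerivAt.comp_hasDerivAt 0 H0
        rw [← hAij]; exact this
      have hf0 : NormedSpace.exp ((0:ℝ) • A) p.1 p.2 = 0 := by
        rw [zero_smul, exp_zero]
        exact Matrix.one_apply_ne (ne_of_lt hplt)
      rw [hasDerivAt_iff_tendsto_slope] at Hf
      have hcc : (0:ℝ) < c * c := mul_self_pos.mpr hc0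
      have hev : ∀ᶠ y in nhds c, 0 < y * c :=
        (isOpen_lt continuous_const (continuous_mul_right c)).eventually_mem hcc
      have hev2 : ∀ᶠ t in nhdsWithin (0:ℝ) {0}ᶜ, 0 < slope (fun t : ℝ => NormedSpace.exp (t • A) p.1 p.2) 0 t * c :=
        Hf.eventually hev
      have hmono : nhdsWithin (0:ℝ) (Set.Ioi 0) ≤ nhdsWithin (0:ℝ) {0}ᶜ :=
        nhdsWithin_mono 0 (fun t ht => ne_of_gt ht)
      filter_upwards [hev2.filter_mono hmono, self_mem_nhdsWithin] with t hslope (htpos : t ∈ Set.Ioi 0)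
      have htpos' : (0:ℝ) < t := htpos
      have hft : 0 < NormedSpace.exp (t • A) p.1 p.2 * c := by
        have h3 := mul_pos hslope htpos'
        simp only [slope_def_field, hf0, sub_zero] at h3
        have h5 : NormedSpace.exp (t • A) p.1 p.2 / t * c * t = NormedSpace.exp (t • A) p.1 p.2 * c := by
          field_simp
        rw [h5] at h3
        exact h3
      rcases hc1 with h | h
      · rw [h, mul_one] at hft
        rw [h, Real.sign_of_pos hft]
      · rw [h] at hft
        have : NormedSpace.exp (t • A) p.1 p.2 < 0 := by nlinarith
        rw [h, Real.sign_of_neg this]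
    obtain ⟨t, ht⟩ := key.exists
    refine ⟨NormedSpace.exp (t • A), hmem t, ?_⟩
    intro x hx
    obtain ⟨p, hp, rfl⟩ := Finset.mem_image.mp hx
    have hsum : (∑ i, ∑ j, myPt d p.1 p.2 (Sum.inl i) * NormedSpace.exp (t • A) i j *
        myPt d p.1 p.2 (Sum.inr j)) = NormedSpace.exp (t • A) p.1 p.2 := by
      simp [myPt, Pi.single_apply, ite_mul, mul_ite]
    rw [hsum]
    exact ht p hp
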